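/- arXiv:2602.04282 — 2 statements merged into one kernel-verified Lean document; each statement's English description precedes it below -/
import Mathlib

section
/- Lemma 3.2 (uniform moment bounds for the separation times): for every real p ≥ 1 there exist constants c_p, c'_p > 0, independent of L, such that for all L ∈ ℕ, c_p ≤ E_Q[(τ̄^{(L)}_1)^p]^{1/p} ≤ c'_p, where τ̄^{(L)}_1 := 4^{−L} τ^{(L)}_1. -/
open MeasureTheory ProbabilityTheory Filter Set Topology
open scoped ENNReal NNReal


section Aux
variable {Ω : Type*} [MeasurableSpace Ω]

/-- success event: a run of `L` ones at positions `j-L,…,j-1` followed by a non-one at `j`. -/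
def sepC (ε : ℕ → Ω → ℤ) (L j : ℕ) : Set Ω :=
  {a | (∀ i : ℕ, j - L ≤ i → i < j → ε i a = 1) ∧ (ε j a = -1 ∨ ε j a = 0)}

lemma sepC_eq (ε : ℕ → Ω → ℤ) (L j : ℕ) :
    sepC ε L j = (⋂ i ∈ Finset.Ico (j - L) j, ε i ⁻¹' {1}) ∩ ε j ⁻¹' {-1, 0} := by
  ext a
  simp only [sepC, mem_setOf_eq, mem_inter_iff, mem_iInter, Finset.mem_Ico, mem_preimage,
    mem_insert_iff, mem_singleton_iff]
  constructor
  · rintro ⟨h1, h2⟩; exact ⟨fun i hi => h1 i hi.1 hi.2, h2⟩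
  · rintro ⟨h1, h2⟩; exact ⟨fun i hi1 hi2 => h1 i ⟨hi1, hi2⟩, h2⟩

lemma measurableSet_sepC {ε : ℕ → Ω → ℤ} (hmeas : ∀ i, Measurable (ε i)) (L j : ℕ) :
    MeasurableSet (sepC ε L j) := by
  rw [sepC_eq]
  exact ((Finset.measurableSet_biInter _ fun i _ =>
    (hmeas i) MeasurableSpace.measurableSet_top).inter
    ((hmeas j) MeasurableSpace.measurableSet_top))

/-- measurability of `sepC` w.r.t. a sub-σ-algebra containing the relevant coordinates. -/
lemma measurableIn_sepC {ε : ℕ → Ω → ℤ} (L j : ℕ) (M : MeasurableSpace Ω)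
    (h : ∀ i, j - L ≤ i → i ≤ j → ∀ B : Set ℤ, MeasurableSet[M] (ε i ⁻¹' B)) :
    MeasurableSet[M] (sepC ε L j) := by
  rw [sepC_eq]
  refine MeasurableSet.inter ?_ (h j (Nat.sub_le _ _) le_rfl _)
  exact Finset.measurableSet_biInter _ fun i hi => by
    rw [Finset.mem_Ico] at hi
    exact h i hi.1 hi.2.le _

variable (Q : Measure Ω) [IsProbabilityMeasure Q]

lemma meas_sepC {ε : ℕ → Ω → ℤ} (hmeas : ∀ i, Measurable (ε i))
    (hindep : iIndepFun ε Q)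
    (h1 : ∀ i, Q {a | ε i a = 1} = 1 / 4)
    (hm1 : ∀ i, Q {a | ε i a = -1} = 1 / 4)
    (h0 : ∀ i, Q {a | ε i a = 0} = 1 / 2)
    {L j : ℕ} (hL : L ≤ j) :
    Q (sepC ε L j) = (1 / 4) ^ L * (3 / 4) := by
  have hpre1 : ∀ i, ε i ⁻¹' ({1} : Set ℤ) = {a | ε i a = 1} := fun i => rfl
  have hprej : Q (ε j ⁻¹' ({-1, 0} : Set ℤ)) = 3 / 4 := by
    have heq : (ε j ⁻¹' ({-1, 0} : Set ℤ)) = ε j ⁻¹' {-1} ∪ ε j ⁻¹' {0} := by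
      ext a; simp [Set.mem_preimage]
    have hdisj : Disjoint (ε j ⁻¹' ({-1} : Set ℤ)) (ε j ⁻¹' ({0} : Set ℤ)) := by
      rw [Set.disjoint_left]; rintro a ha1 ha2
      simp only [mem_preimage, mem_singleton_iff] at ha1 ha2; omega
    rw [heq, measure_union hdisj ((hmeas j) (measurableSet_singleton 0))]
    have e1 : ε j ⁻¹' ({-1} : Set ℤ) = {a | ε j a = -1} := rfl
    have e2 : ε j ⁻¹' ({0} : Set ℤ) = {a | ε j a = 0} := rfl
    rw [e1, e2, hm1, h0]
    norm_num
    rw [ENNReal.eq_div_iff (by norm_num) (by norm_num)]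
    rw [mul_add, ENNReal.mul_inv_cancel (by norm_num) (by norm_num)]
    rw [show (4:ℝ≥0∞) = 2*2 by norm_num, mul_assoc,
      ENNReal.mul_inv_cancel (by norm_num) (by norm_num)]
    norm_num
  -- express as intersection over Icc
  have hrep : sepC ε L j
      = ⋂ i ∈ Finset.Icc (j - L) j,
          (fun i => ε i ⁻¹' (if i = j then ({-1, 0} : Set ℤ) else {1})) i := by
    rw [sepC_eq]
    ext a
    simp only [mem_inter_iff, mem_iInter, Finset.mem_Ico, Finset.mem_Icc]
    constructor
    · rintro ⟨ha, hb⟩ i ⟨hi1, hi2⟩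
      by_cases hij : i = j
      · subst hij; simp [hb]
      · have : i < j := lt_of_le_of_ne hi2 hij
        simp only [hij, if_false]
        exact ha i ⟨hi1, this⟩
    · intro h
      constructor
      · intro i hi
        have := h i ⟨hi.1, hi.2.le⟩
        simpa [Nat.ne_of_lt hi.2] using this
      · have := h j ⟨Nat.sub_le _ _, le_rfl⟩
        simpa using this
  rw [hrep, hindep.meas_biInter (fun i _ => ⟨_, MeasurableSpace.measurableSet_top, rfl⟩)]
  have hsplit : Finset.Icc (j - L) j = insert j (Finset.Ico (j - L) j) := by
    rw [Finset.Ico_insert_right (Nat.sub_le _ _)]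
  rw [hsplit, Finset.prod_insert (by simp)]
  have hIco : ∀ i ∈ Finset.Ico (j - L) j,
      Q (ε i ⁻¹' (if i = j then ({-1, 0} : Set ℤ) else {1})) = 1 / 4 := by
    intro i hi
    rw [Finset.mem_Ico] at hi
    rw [if_neg (Nat.ne_of_lt hi.2), hpre1, h1]
  rw [Finset.prod_congr rfl hIco, Finset.prod_const, if_pos rfl, hprej,
    Nat.card_Ico]
  have : j - (j - L) = L := by omega
  rw [this, mul_comm]

end Aux

section Aux2
variable {Ω : Type*} [MeasurableSpace Ω]

/-- at least one success inside the `m`-th window of length `2L+1`. -/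
def sepA (ε : ℕ → Ω → ℤ) (L m : ℕ) : Set Ω :=
  ⋃ s ∈ Finset.range (L + 1), sepC ε L ((2 * L + 1) * m + s + L)

/-- no success in the first `n` windows. -/
def sepE (ε : ℕ → Ω → ℤ) (L n : ℕ) : Set Ω :=
  ⋂ m ∈ Finset.range n, (sepA ε L m)ᶜ

lemma sepC_disjoint (ε : ℕ → Ω → ℤ) (L b : ℕ) {s t : ℕ} (hs : s ≤ L) (ht : t ≤ L)
    (hst : s < t) : Disjoint (sepC ε L (b + s + L)) (sepC ε L (b + t + L)) := by
  rw [Set.disjoint_left]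
  rintro a ⟨_, h2⟩ ⟨h3, _⟩
  have h4 : ε (b + s + L) a = 1 := h3 (b + s + L) (by omega) (by omega)
  omega

lemma measurableSet_sepA {ε : ℕ → Ω → ℤ} (hmeas : ∀ i, Measurable (ε i)) (L m : ℕ) :
    MeasurableSet (sepA ε L m) :=
  Finset.measurableSet_biUnion _ fun _ _ => measurableSet_sepC hmeas _ _

lemma measurableSet_sepE {ε : ℕ → Ω → ℤ} (hmeas : ∀ i, Measurable (ε i)) (L n : ℕ) :
    MeasurableSet (sepE ε L n) :=
  Finset.measurableSet_biInter _ fun _ _ => (measurableSet_sepA hmeas L _).compl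

variable (Q : Measure Ω) [IsProbabilityMeasure Q]

lemma meas_sepA {ε : ℕ → Ω → ℤ} (hmeas : ∀ i, Measurable (ε i))
    (hindep : iIndepFun ε Q)
    (h1 : ∀ i, Q {a | ε i a = 1} = 1 / 4)
    (hm1 : ∀ i, Q {a | ε i a = -1} = 1 / 4)
    (h0 : ∀ i, Q {a | ε i a = 0} = 1 / 2) (L m : ℕ) :
    Q (sepA ε L m) = (L + 1) * ((1 / 4) ^ L * (3 / 4)) := by
  rw [sepA, measure_biUnion_finset ?disj (fun _ _ => measurableSet_sepC hmeas _ _)]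
  · have : ∀ s ∈ Finset.range (L + 1),
        Q (sepC ε L ((2 * L + 1) * m + s + L)) = (1 / 4) ^ L * (3 / 4) := by
      intro s _
      exact meas_sepC Q hmeas hindep h1 hm1 h0 (by omega)
    rw [Finset.sum_congr rfl this, Finset.sum_const, Finset.card_range, nsmul_eq_mul]
    push_cast; ring
  case disj =>
    intro s hs t ht hst
    simp only [Finset.coe_range, mem_Iio, Finset.mem_coe, Finset.mem_range] at hs ht
    rcases lt_or_gt_of_ne hst with h | h
    · exact sepC_disjoint ε L _ (by omega) (by omega) h
    · exact (sepC_disjoint ε L _ (by omega) (by omega) h).symm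

lemma measurableIn_sepE {ε : ℕ → Ω → ℤ} (L n : ℕ) (M : MeasurableSpace Ω)
    (h : ∀ i, i < (2 * L + 1) * n → ∀ B : Set ℤ, MeasurableSet[M] (ε i ⁻¹' B)) :
    MeasurableSet[M] (sepE ε L n) := by
  refine Finset.measurableSet_biInter _ fun m hm => MeasurableSet.compl ?_
  refine Finset.measurableSet_biUnion _ fun s hs => ?_
  rw [Finset.mem_range] at hm hs
  refine measurableIn_sepC _ _ M fun i hi1 hi2 B => h i ?_ B
  have hmul : (2 * L + 1) * (m + 1) ≤ (2 * L + 1) * n := Nat.mul_le_mul_left _ hm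
  rw [Nat.mul_succ] at hmul
  omega

lemma meas_sepE {ε : ℕ → Ω → ℤ} (hmeas : ∀ i, Measurable (ε i))
    (hindep : iIndepFun ε Q)
    (h1 : ∀ i, Q {a | ε i a = 1} = 1 / 4)
    (hm1 : ∀ i, Q {a | ε i a = -1} = 1 / 4)
    (h0 : ∀ i, Q {a | ε i a = 0} = 1 / 2) (L : ℕ) :
    ∀ n, Q (sepE ε L n) = (1 - (L + 1) * ((1 / 4) ^ L * (3 / 4))) ^ n := by
  intro n
  induction n with
  | zero => simp [sepE]
  | succ n ih =>
    have hEstep : sepE ε L (n + 1) = sepE ε L n ∩ (sepA ε L n)ᶜ := by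
      rw [sepE, Finset.range_add_one]
      rw [Finset.set_biInter_insert]
      rw [Set.inter_comm]; rfl
    -- independence of the two σ-algebras
    have hle : ∀ i, MeasurableSpace.comap (ε i) inferInstance ≤ ‹MeasurableSpace Ω› :=
      fun i => (hmeas i).comap_le
    have hdisj : Disjoint {i : ℕ | i < (2 * L + 1) * n} {i : ℕ | (2 * L + 1) * n ≤ i} := by
      rw [Set.disjoint_left]; intro i hi1 hi2
      simp only [mem_setOf_eq] at hi1 hi2; omega
    have hind := indep_iSup_of_disjoint hle hindep.iIndep hdisj
    have hmem : ∀ (T : Set ℕ) (i : ℕ), i ∈ T → ∀ B : Set ℤ,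
        MeasurableSet[⨆ i ∈ T, MeasurableSpace.comap (ε i) inferInstance] (ε i ⁻¹' B) := by
      intro T i hi B
      have hle2 : MeasurableSpace.comap (ε i) inferInstance
          ≤ ⨆ i ∈ T, MeasurableSpace.comap (ε i) inferInstance := by
        exact le_iSup₂ (f := fun i _ => MeasurableSpace.comap (ε i) inferInstance) i hi
      exact hle2 _ ⟨B, MeasurableSpace.measurableSet_top, rfl⟩
    have hE : MeasurableSet[⨆ i ∈ {i : ℕ | i < (2 * L + 1) * n},
        MeasurableSpace.comap (ε i) inferInstance] (sepE ε L n) :=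
      measurableIn_sepE L n _ fun i hi B => hmem {i : ℕ | i < (2 * L + 1) * n} i hi B
    have hA : MeasurableSet[⨆ i ∈ {i : ℕ | (2 * L + 1) * n ≤ i},
        MeasurableSpace.comap (ε i) inferInstance] ((sepA ε L n)ᶜ) := by
      refine MeasurableSet.compl ?_
      refine Finset.measurableSet_biUnion _ fun s hs => ?_
      rw [Finset.mem_range] at hs
      refine measurableIn_sepC _ _ _ fun i hi1 hi2 B =>
        hmem {i : ℕ | (2 * L + 1) * n ≤ i} i ?_ B
      simp only [mem_setOf_eq]
      have : (2 * L + 1) * n + s ≤ i := by omega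
      omega
    have hprod := (Indep_iff _ _ _).mp hind _ _ hE hA
    rw [hEstep, hprod, ih]
    have hAc : Q ((sepA ε L n)ᶜ) = 1 - (L + 1) * ((1 / 4) ^ L * (3 / 4)) := by
      rw [prob_compl_eq_one_sub (measurableSet_sepA hmeas L n),
        meas_sepA Q hmeas hindep h1 hm1 h0 L n]
    rw [hAc, pow_succ]

end Aux2


lemma succ_le_four_pow (L : ℕ) : (L + 1 : ℝ) ≤ 4 ^ L := by
  have h1 : L + 1 ≤ 2 ^ L := Nat.lt_two_pow_self (n := L)
  have h2 : (2:ℕ) ^ L ≤ 4 ^ L := Nat.pow_le_pow_left (by norm_num) L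
  have := h1.trans h2
  exact_mod_cast this

lemma qR_le (L : ℕ) : ((L:ℝ) + 1) * ((1/4)^L * (3/4)) ≤ 3/4 := by
  have h4 : (0:ℝ) < 4 ^ L := by positivity
  have h := succ_le_four_pow L
  rw [one_div, inv_pow]
  rw [mul_comm ((4:ℝ)^L)⁻¹ (3/4), ← mul_assoc, mul_comm ((L:ℝ)+1) (3/4), mul_assoc]
  have : ((L:ℝ) + 1) * ((4:ℝ)^L)⁻¹ ≤ 1 := by
    rw [mul_inv_le_iff₀ h4, one_mul]; exact h
  nlinarith

lemma ofReal_qR (L : ℕ) :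
    ENNReal.ofReal (((L:ℝ) + 1) * ((1/4)^L * (3/4)))
      = ((L:ℝ≥0∞) + 1) * ((1/4)^L * (3/4)) := by
  rw [ENNReal.ofReal_mul (by positivity), ENNReal.ofReal_mul (by positivity),
    ENNReal.ofReal_pow (by norm_num)]
  congr 1
  · rw [ENNReal.ofReal_add (by positivity) zero_le_one, ENNReal.ofReal_natCast,
      ENNReal.ofReal_one]
  · congr 1
    · norm_num [ENNReal.ofReal_div_of_pos]
    · rw [show (3/4 : ℝ) = (3:ℝ)/4 by norm_num,
        ENNReal.ofReal_div_of_pos (by norm_num)]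
      norm_num

lemma tail_bound (L k : ℕ) :
    (1 - ((L:ℝ≥0∞) + 1) * ((1/4)^L * (3/4))) ^ (k * 4 ^ L / (2 * L + 1))
      ≤ ENNReal.ofReal (3 * Real.exp (-(3/8) * k)) := by
  set n := k * 4 ^ L / (2 * L + 1) with hn
  set qR : ℝ := ((L:ℝ) + 1) * ((1/4)^L * (3/4)) with hqR
  have hq0 : 0 ≤ qR := by positivity
  have hq34 : qR ≤ 3/4 := qR_le L
  have h1q : 0 ≤ 1 - qR := by linarith
  -- pass to ℝ
  have hE : (1 - ((L:ℝ≥0∞) + 1) * ((1/4)^L * (3/4))) = ENNReal.ofReal (1 - qR) := by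
    rw [← ofReal_qR, ← ENNReal.ofReal_one, ← ENNReal.ofReal_sub _ hq0]
  rw [hE, ← ENNReal.ofReal_pow h1q]
  apply ENNReal.ofReal_le_ofReal
  -- real estimate
  have hexp : (1 - qR) ^ n ≤ Real.exp (-qR) ^ n := by
    apply pow_le_pow_left₀ h1q
    have := Real.add_one_le_exp (-qR)
    linarith
  have hexp2 : Real.exp (-qR) ^ n = Real.exp (-(qR * n)) := by
    rw [← Real.exp_nat_mul]; ring_nf
  -- key arithmetic: (3/8) * k ≤ qR * (n + 1)
  have hdiv : (k * 4 ^ L : ℕ) < (2 * L + 1) * (n + 1) :=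
    Nat.lt_mul_div_succ _ (by omega)
  have hdivR : (k : ℝ) * 4 ^ L ≤ (2 * (L:ℝ) + 1) * (n + 1) := by
    have : ((k * 4 ^ L : ℕ) : ℝ) ≤ (((2 * L + 1) * (n + 1) : ℕ) : ℝ) := by
      exact_mod_cast hdiv.le
    push_cast at this
    linarith
  have hkey : (3/8 : ℝ) * k ≤ qR * (n + 1) := by
    have h4 : (0:ℝ) < 4 ^ L := by positivity
    have hD : (0:ℝ) < 2 * (L:ℝ) + 1 := by positivity
    have hfrac : (k:ℝ) * 4 ^ L / (2 * (L:ℝ) + 1) ≤ (n:ℝ) + 1 := by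
      rw [div_le_iff₀ hD]; linarith [hdivR]
    have hq' : qR = (3/4) * ((L:ℝ) + 1) / 4 ^ L := by
      rw [hqR, one_div, inv_pow]; field_simp
    rw [hq', div_mul_eq_mul_div (3/4 * ((L:ℝ) + 1)) ((4:ℝ) ^ L) ((n:ℝ) + 1),
      le_div_iff₀ h4]
    nlinarith [hdivR, Nat.cast_nonneg (α := ℝ) n, Nat.cast_nonneg (α := ℝ) L]
  have hkey' : (3/8 : ℝ) * k ≤ qR * n + qR := by
    have hexpand : qR * ((n:ℝ) + 1) = qR * n + qR := by ring
    linarith [hkey, hexpand.le, hexpand.ge]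
  have hmono : Real.exp (-(qR * n)) ≤ Real.exp (3/4 - (3/8) * k) := by
    apply Real.exp_le_exp.mpr
    linarith
  have h3 : Real.exp (3/4 - (3/8) * k) ≤ 3 * Real.exp (-(3/8) * k) := by
    rw [show (3/4 - (3/8) * (k:ℝ)) = 3/4 + (-(3/8) * k) by ring, Real.exp_add]
    have h33 : Real.exp (3/4) ≤ 3 := by
      have ha : Real.exp (3/4) ≤ Real.exp 1 := Real.exp_le_exp.mpr (by norm_num)
      have hb := Real.exp_one_lt_d9
      linarith
    exact mul_le_mul_of_nonneg_right h33 (Real.exp_pos _).le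
  calc (1 - qR) ^ n ≤ Real.exp (-qR) ^ n := hexp
    _ = Real.exp (-(qR * n)) := hexp2
    _ ≤ Real.exp (3/4 - (3/8) * k) := hmono
    _ ≤ 3 * Real.exp (-(3/8) * k) := h3

set_option maxHeartbeats 1000000 in
lemma summable_aux (N : ℕ) :
    Summable (fun k : ℕ => ((k:ℝ) + 2) ^ N * (3 * Real.exp (-(3/8) * k))) := by
  set θ : ℝ := Real.exp (-(3/8)) with hθ
  have hθ0 : 0 < θ := Real.exp_pos _
  have hθ1 : θ < 1 := Real.exp_lt_one_iff.mpr (by norm_num)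
  have hg : Summable (fun n : ℕ => (n:ℝ) ^ N * θ ^ n) :=
    summable_pow_mul_geometric_of_norm_lt_one N (by rw [Real.norm_eq_abs, abs_of_pos hθ0]; exact hθ1)
  have hg2 : Summable (fun n : ℕ => ((n + 2 : ℕ):ℝ) ^ N * θ ^ (n + 2)) :=
    (summable_nat_add_iff 2).mpr hg
  have hg3 := hg2.mul_left (3 * (θ ^ 2)⁻¹)
  apply hg3.congr
  intro n
  have : Real.exp (-(3/8) * n) = θ ^ n := by
    rw [hθ, ← Real.exp_nat_mul]; ring_nf
  rw [this]
  push_cast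
  rw [pow_add]
  field_simp



set_option maxHeartbeats 1000000 in
/-- Lemma 3.2: uniform `L^p`-moment bounds for the rescaled separation times
`τ̄^{(L)} := 4^{−L} τ^{(L)}`: for every real `p ≥ 1` there are constants
`0 < c ≤ c' < ∞`, independent of `L`, with `c ≤ E_Q[(τ̄^{(L)})^p]^{1/p} ≤ c'`. -/
theorem separation_time_moment_bounds
    {Ω : Type*} [MeasurableSpace Ω] (Q : Measure Ω) [IsProbabilityMeasure Q]
    -- i.i.d. coordinates with values in {−1,0,1}
    (ε : ℕ → Ω → ℤ) (hmeas : ∀ i, Measurable (ε i))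
    (hval : ∀ i a, ε i a = -1 ∨ ε i a = 0 ∨ ε i a = 1)
    (hindep : iIndepFun ε Q)
    (h1 : ∀ i, Q {a | ε i a = 1} = 1 / 4)
    (hm1 : ∀ i, Q {a | ε i a = -1} = 1 / 4)
    (h0 : ∀ i, Q {a | ε i a = 0} = 1 / 2)
    -- the separation time τ^{(L)}
    (τ : ℕ → Ω → ℕ)
    (hτ : ∀ L a, τ L a = sInf {j : ℕ | L ≤ j ∧
      (∀ i : ℕ, j - L ≤ i → i < j → ε i a = 1) ∧ (ε j a = -1 ∨ ε j a = 0)}) :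
    ∀ p : ℝ, 1 ≤ p →
      ∃ c c' : ℝ≥0∞, 0 < c ∧ c' < ⊤ ∧ ∀ L : ℕ,
        c ≤ (∫⁻ a, ENNReal.ofReal ((τ L a : ℝ) / 4 ^ L) ^ p ∂Q) ^ (1 / p) ∧
        (∫⁻ a, ENNReal.ofReal ((τ L a : ℝ) / 4 ^ L) ^ p ∂Q) ^ (1 / p) ≤ c' := by
  intro p hp
  have hp0 : (0:ℝ) < p := lt_of_lt_of_le one_pos hp
  set N : ℕ := ⌈p⌉₊ with hN
  have hpN : p ≤ (N:ℝ) := Nat.le_ceil p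
  -- the dominating constant
  set v : ℕ → ℝ := fun k => Nat.casesOn k 1
    (fun k' => ((k':ℝ) + 2) ^ N * (3 * Real.exp (-(3/8) * k'))) with hv
  have hv0 : ∀ k, 0 ≤ v k := by
    intro k; cases k with
    | zero => norm_num [hv]
    | succ k' => simp only [hv]; positivity
  have hsumv : Summable v := by
    refine (summable_nat_add_iff 1).mp ?_
    exact (summable_aux N).congr (fun n => rfl)
  set M : ℝ≥0∞ := ∑' k, ENNReal.ofReal (v k) with hM
  have hMne : M ≠ ⊤ := by
    rw [hM, ← ENNReal.ofReal_tsum_of_nonneg hv0 hsumv]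
    exact ENNReal.ofReal_ne_top
  refine ⟨1/4, M ^ (1/p), by norm_num, ?_, ?_⟩
  · exact ENNReal.rpow_lt_top_of_nonneg (by positivity) hMne
  intro L
  -- notation
  set S : Ω → Set ℕ := fun a => {j : ℕ | L ≤ j ∧
      (∀ i : ℕ, j - L ≤ i → i < j → ε i a = 1) ∧ (ε j a = -1 ∨ ε j a = 0)} with hS
  have hmemS : ∀ a j, j ∈ S a ↔ (L ≤ j ∧ a ∈ sepC ε L j) := by
    intro a j
    simp only [hS, mem_setOf_eq, sepC, and_assoc]
  have hτS : ∀ a, τ L a = sInf (S a) := fun a => hτ L a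
  have h4L : (0:ℕ) < 4 ^ L := Nat.pow_pos (by norm_num)
  have h4LR : (0:ℝ) < 4 ^ L := by positivity
  have hqne : ((L:ℝ≥0∞) + 1) * ((1/4)^L * (3/4)) ≠ 0 := by
    apply mul_ne_zero
    · simp
    · apply mul_ne_zero
      · apply pow_ne_zero; simp [ENNReal.div_eq_zero_iff]
      · simp [ENNReal.div_eq_zero_iff]
  -- τ is at least (2L+1)*n on sepE L n
  have hsubE : ∀ (n : ℕ) (a : Ω), ((2 * L + 1) * n ≤ τ L a ∨ S a = ∅) → a ∈ sepE ε L n := by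
    intro n a ha
    by_contra hcon
    simp only [sepE, mem_iInter, Finset.mem_range, not_forall, mem_compl_iff, not_not] at hcon
    obtain ⟨m, hm, hAm⟩ := hcon
    simp only [sepA, mem_iUnion, Finset.mem_range, exists_prop] at hAm
    obtain ⟨s, hs, hCs⟩ := hAm
    set j := (2 * L + 1) * m + s + L with hj
    have hjS : j ∈ S a := (hmemS a j).mpr ⟨by omega, hCs⟩
    have hjlt : j < (2 * L + 1) * n := by
      have hmul : (2 * L + 1) * (m + 1) ≤ (2 * L + 1) * n := Nat.mul_le_mul_left _ hm
      rw [Nat.mul_succ] at hmul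
      omega
    rcases ha with ha | ha
    · have : τ L a ≤ j := by rw [hτS]; exact Nat.sInf_le hjS
      omega
    · rw [ha] at hjS; exact absurd hjS (Set.notMem_empty j)
  -- a.s. nonemptiness of S
  set Z : Set Ω := {a | ∀ j, j ∉ S a} with hZ
  have hQZ : Q Z = 0 := by
    have hsub : ∀ n, Z ⊆ sepE ε L n := by
      intro n a ha
      refine hsubE n a (Or.inr ?_)
      rw [Set.eq_empty_iff_forall_notMem]; exact ha
    have hlt1 : (1:ℝ≥0∞) - ((L:ℝ≥0∞) + 1) * ((1/4)^L * (3/4)) < 1 :=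
      ENNReal.sub_lt_self ENNReal.one_ne_top one_ne_zero hqne
    have htend := ENNReal.tendsto_pow_atTop_nhds_zero_of_lt_one hlt1
    have hboundn : ∀ n, Q Z ≤ (1 - ((L:ℝ≥0∞) + 1) * ((1/4)^L * (3/4)))^n := fun n =>
      (measure_mono (hsub n)).trans_eq (meas_sepE Q hmeas hindep h1 hm1 h0 L n)
    exact le_zero_iff.mp (ge_of_tendsto' htend hboundn)
  constructor
  -- ══════════ lower bound ══════════
  · -- the set where some success occurs before time 4^L
    set U : Set Ω := ⋃ j ∈ Finset.Ico L (4 ^ L), sepC ε L j with hU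
    have hUmeas : MeasurableSet U :=
      Finset.measurableSet_biUnion _ fun j _ => measurableSet_sepC hmeas _ _
    have hQU : Q U ≤ 3/4 := by
      refine le_trans (measure_biUnion_finset_le _ _) ?_
      have heach : ∀ j ∈ Finset.Ico L (4 ^ L), Q (sepC ε L j) = (1/4)^L * (3/4) := by
        intro j hj
        rw [Finset.mem_Ico] at hj
        exact meas_sepC Q hmeas hindep h1 hm1 h0 hj.1
      rw [Finset.sum_congr rfl heach, Finset.sum_const, Nat.card_Ico, nsmul_eq_mul]
      calc ((4 ^ L - L : ℕ) : ℝ≥0∞) * ((1/4)^L * (3/4))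
          ≤ ((4:ℝ≥0∞) ^ L) * ((1/4)^L * (3/4)) := by
            gcongr
            calc ((4 ^ L - L : ℕ) : ℝ≥0∞) ≤ ((4 ^ L : ℕ) : ℝ≥0∞) := by
                  exact_mod_cast Nat.cast_le.mpr (Nat.sub_le _ _)
              _ = (4:ℝ≥0∞) ^ L := by push_cast; ring
        _ = (4 ^ L * (1/4)^L) * (3/4) := by ring
        _ = 3/4 := by
            rw [one_div, ← ENNReal.inv_pow, ENNReal.mul_inv_cancel
              (by positivity) (by simp), one_mul]
    have hQUc : (1:ℝ≥0∞)/4 ≤ Q Uᶜ := by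
      rw [prob_compl_eq_one_sub hUmeas]
      have hq14 : (1:ℝ≥0∞) = 1/4 + 3/4 := by
        rw [ENNReal.div_add_div_same, show (1:ℝ≥0∞) + 3 = 4 by norm_num,
          ENNReal.div_self (by norm_num) (by norm_num)]
      have h34 : (1:ℝ≥0∞) - 3/4 = 1/4 :=
        ENNReal.sub_eq_of_eq_add (ENNReal.div_lt_top (by norm_num) (by norm_num)).ne hq14
      calc (1:ℝ≥0∞)/4 = 1 - 3/4 := h34.symm
        _ ≤ 1 - Q U := tsub_le_tsub_left hQU 1
    -- F = no early success and S nonempty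
    set Nn : Set Ω := {a | ∃ j, j ∈ S a} with hNn
    have hNmeas : MeasurableSet Nn := by
      have : Nn = ⋃ j ∈ {j : ℕ | L ≤ j}, sepC ε L j := by
        ext a
        simp only [hNn, mem_setOf_eq, mem_iUnion, exists_prop]
        constructor
        · rintro ⟨j, hj⟩
          exact ⟨j, ((hmemS a j).mp hj).1, ((hmemS a j).mp hj).2⟩
        · rintro ⟨j, hj1, hj2⟩
          exact ⟨j, (hmemS a j).mpr ⟨hj1, hj2⟩⟩
      rw [this]
      exact MeasurableSet.biUnion (to_countable _) fun j _ => measurableSet_sepC hmeas _ _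
    have hQF : (1:ℝ≥0∞)/4 ≤ Q (Uᶜ ∩ Nn) := by
      have hsplit : Q Uᶜ = Q (Uᶜ ∩ Nn) + Q (Uᶜ \ Nn) :=
        (measure_inter_add_diff Uᶜ hNmeas).symm
      have hdiff : Q (Uᶜ \ Nn) = 0 := by
        refine le_zero_iff.mp ?_
        rw [← hQZ]
        refine measure_mono ?_
        intro a ha
        simp only [hZ, mem_setOf_eq]
        intro j hj
        exact ha.2 ⟨j, hj⟩
      rw [hsplit, hdiff, add_zero] at hQUc
      exact hQUc
    -- on Uᶜ ∩ Nn, τ ≥ 4^L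
    have hτbig : ∀ a ∈ Uᶜ ∩ Nn, (4:ℕ)^L ≤ τ L a := by
      rintro a ⟨haU, haN⟩
      have hne : (S a).Nonempty := haN
      have hmem : τ L a ∈ S a := by rw [hτS]; exact Nat.sInf_mem hne
      by_contra hcon
      push_neg at hcon
      have h1' : L ≤ τ L a := ((hmemS a _).mp hmem).1
      have h2' : a ∈ sepC ε L (τ L a) := ((hmemS a _).mp hmem).2
      exact haU (Set.mem_biUnion (Finset.mem_Ico.mpr ⟨h1', hcon⟩) h2')
    -- conclude
    have hIlow : (1:ℝ≥0∞)/4 ≤ ∫⁻ a, ENNReal.ofReal ((τ L a : ℝ) / 4 ^ L) ^ p ∂Q := by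
      refine le_trans hQF ?_
      rw [← lintegral_indicator_one (hUmeas.compl.inter hNmeas)]
      refine lintegral_mono fun a => ?_
      by_cases ha : a ∈ Uᶜ ∩ Nn
      · rw [Set.indicator_of_mem ha]
        have h1' : (1:ℝ) ≤ (τ L a : ℝ) / 4 ^ L := by
          rw [le_div_iff₀ h4LR, one_mul]
          exact_mod_cast hτbig a ha
        have h2' : (1:ℝ≥0∞) ≤ ENNReal.ofReal ((τ L a : ℝ) / 4 ^ L) :=
          ENNReal.one_le_ofReal.mpr h1'
        calc (1:ℝ≥0∞) = 1 ^ p := (ENNReal.one_rpow p).symm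
          _ ≤ ENNReal.ofReal ((τ L a : ℝ) / 4 ^ L) ^ p :=
            ENNReal.rpow_le_rpow h2' hp0.le
      · rw [Set.indicator_of_notMem ha]; exact zero_le
    calc (1:ℝ≥0∞)/4 = (1/4) ^ (1:ℝ) := by rw [ENNReal.rpow_one]
      _ ≤ (1/4 : ℝ≥0∞) ^ (1/p) := by
          refine ENNReal.rpow_le_rpow_of_exponent_ge ?_ ?_
          · simp [ENNReal.div_le_iff (by norm_num : (4:ℝ≥0∞) ≠ 0) (by norm_num)]
          · rw [div_le_one hp0]; exact hp
      _ ≤ (∫⁻ a, ENNReal.ofReal ((τ L a : ℝ) / 4 ^ L) ^ p ∂Q) ^ (1/p) :=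
          ENNReal.rpow_le_rpow hIlow (by positivity)
  -- ══════════ upper bound ══════════
  · set G : ℕ → Set Ω := fun k => Nat.casesOn k univ
      (fun k' => sepE ε L (k' * 4 ^ L / (2 * L + 1))) with hG
    have hGmeas : ∀ k, MeasurableSet (G k) := by
      intro k; cases k with
      | zero => exact MeasurableSet.univ
      | succ k' => exact measurableSet_sepE hmeas L _
    -- pointwise domination
    have hpt : ∀ a, ENNReal.ofReal ((τ L a : ℝ) / 4 ^ L) ^ p
        ≤ ∑' k, (G k).indicator (fun _ => ((k:ℝ≥0∞) + 1) ^ p) a := by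
      intro a
      set k₀ : ℕ := τ L a / 4 ^ L with hk₀
      have hlt : (τ L a : ℝ) / 4 ^ L < k₀ + 1 := by
        rw [div_lt_iff₀ h4LR]
        have := Nat.lt_mul_div_succ (τ L a) h4L
        calc (τ L a : ℝ) < ((4 ^ L * (τ L a / 4 ^ L + 1) : ℕ) : ℝ) := by exact_mod_cast this
          _ = ((k₀:ℝ) + 1) * 4 ^ L := by push_cast; ring
      have hbound : ENNReal.ofReal ((τ L a : ℝ) / 4 ^ L) ^ p ≤ ((k₀:ℝ≥0∞) + 1) ^ p := by
        refine ENNReal.rpow_le_rpow ?_ hp0.le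
        calc ENNReal.ofReal ((τ L a : ℝ) / 4 ^ L) ≤ ENNReal.ofReal ((k₀:ℝ) + 1) :=
              ENNReal.ofReal_le_ofReal hlt.le
          _ = (k₀:ℝ≥0∞) + 1 := by
              rw [ENNReal.ofReal_add (by positivity) zero_le_one, ENNReal.ofReal_natCast,
                ENNReal.ofReal_one]
      have hmemG : a ∈ G k₀ := by
        cases hk : k₀ with
        | zero => exact mem_univ a
        | succ k' =>
          refine hsubE _ a (Or.inl ?_)
          calc (2 * L + 1) * (k' * 4 ^ L / (2 * L + 1)) ≤ k' * 4 ^ L :=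
                Nat.mul_div_le _ _
            _ ≤ k₀ * 4 ^ L := by
                have : k' ≤ k₀ := by omega
                exact Nat.mul_le_mul_right _ this
            _ ≤ τ L a := by rw [hk₀]; exact Nat.div_mul_le_self _ _
      calc ENNReal.ofReal ((τ L a : ℝ) / 4 ^ L) ^ p ≤ ((k₀:ℝ≥0∞) + 1) ^ p := hbound
        _ = (G k₀).indicator (fun _ => ((k₀:ℝ≥0∞) + 1) ^ p) a := by
            rw [Set.indicator_of_mem hmemG]
        _ ≤ ∑' k, (G k).indicator (fun _ => ((k:ℝ≥0∞) + 1) ^ p) a := ENNReal.le_tsum k₀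
    have hIup : (∫⁻ a, ENNReal.ofReal ((τ L a : ℝ) / 4 ^ L) ^ p ∂Q) ≤ M := by
      calc (∫⁻ a, ENNReal.ofReal ((τ L a : ℝ) / 4 ^ L) ^ p ∂Q)
          ≤ ∫⁻ a, ∑' k, (G k).indicator (fun _ => ((k:ℝ≥0∞) + 1) ^ p) a ∂Q :=
            lintegral_mono hpt
        _ = ∑' (k : ℕ), ∫⁻ a, (G k).indicator (fun _ => ((k:ℝ≥0∞) + 1) ^ p) a ∂Q :=
            lintegral_tsum fun k =>
              ((measurable_const.indicator (hGmeas k)).aemeasurable)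
        _ = ∑' (k : ℕ), ((k:ℝ≥0∞) + 1) ^ p * Q (G k) :=
            tsum_congr fun k => lintegral_indicator_const (hGmeas k) _
        _ ≤ ∑' (k : ℕ), ENNReal.ofReal (v k) := by
            refine ENNReal.tsum_le_tsum fun k => ?_
            cases k with
            | zero =>
              simp only [Nat.cast_zero, zero_add, ENNReal.one_rpow, one_mul]
              have : Q (G 0) = 1 := by
                simp only [hG]; exact measure_univ
              rw [this]
              simp [hv]
            | succ k' =>
              have hQGk : Q (G (k' + 1)) ≤ ENNReal.ofReal (3 * Real.exp (-(3/8) * k')) := by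
                have := meas_sepE Q hmeas hindep h1 hm1 h0 L (k' * 4 ^ L / (2 * L + 1))
                calc Q (G (k' + 1)) = (1 - ((L:ℝ≥0∞) + 1) * ((1/4)^L * (3/4)))
                      ^ (k' * 4 ^ L / (2 * L + 1)) := this
                  _ ≤ ENNReal.ofReal (3 * Real.exp (-(3/8) * k')) := tail_bound L k'
              have hfac : (((k' + 1 : ℕ):ℝ≥0∞) + 1) ^ p ≤ ENNReal.ofReal (((k':ℝ) + 2) ^ N) := by
                have hx1 : (1:ℝ≥0∞) ≤ ((k' + 1 : ℕ):ℝ≥0∞) + 1 := le_add_self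
                calc (((k' + 1 : ℕ):ℝ≥0∞) + 1) ^ p
                    ≤ (((k' + 1 : ℕ):ℝ≥0∞) + 1) ^ (N:ℝ) :=
                      ENNReal.rpow_le_rpow_of_exponent_le hx1 hpN
                  _ = (((k' + 1 : ℕ):ℝ≥0∞) + 1) ^ N := by rw [ENNReal.rpow_natCast]
                  _ = ENNReal.ofReal (((k':ℝ) + 2) ^ N) := by
                      rw [ENNReal.ofReal_pow (by positivity)]
                      congr 1
                      rw [show ((k':ℝ) + 2) = ((k':ℝ) + 1) + 1 by ring,
                        ENNReal.ofReal_add (by positivity) zero_le_one,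
                        ENNReal.ofReal_add (by positivity) zero_le_one,
                        ENNReal.ofReal_natCast, ENNReal.ofReal_one]
                      push_cast
                      ring
              calc (((k' + 1 : ℕ):ℝ≥0∞) + 1) ^ p * Q (G (k' + 1))
                  ≤ ENNReal.ofReal (((k':ℝ) + 2) ^ N)
                    * ENNReal.ofReal (3 * Real.exp (-(3/8) * k')) :=
                    mul_le_mul' hfac hQGk
                _ = ENNReal.ofReal (((k':ℝ) + 2) ^ N * (3 * Real.exp (-(3/8) * k'))) :=
                    (ENNReal.ofReal_mul (by positivity)).symm
                _ = ENNReal.ofReal (v (k' + 1)) := rfl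
        _ = M := hM.symm
    exact ENNReal.rpow_le_rpow hIup (by positivity)
end

section
/- Lindeberg-type estimate for the reinforced martingale (proof of Lemma 3.7): for 0 < p < 3/4 and a := 2p − 1, with a_1 := 1, a_n := Γ(a+1)Γ(n)/Γ(n+a) for n ≥ 2, and ν_n := Σ_{k=1}^n a_k², one has Σ_{n=1}^∞ ν_n^{−2} a_n⁴ < ∞ and consequently ν_n^{−2} Σ_{k=1}^n a_k⁴ → 0 as n → ∞. -/
open MeasureTheory ProbabilityTheory Filter Set Topology

set_option maxHeartbeats 2000000 in
/-- Lindeberg-type estimate for the reinforced martingale (proof of Lemma 3.7): for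
`0 < p < 3/4` and `a = 2p − 1`, with `a_n = Γ(a+1)Γ(n)/Γ(n+a)` for `n ≥ 2` and
`ν_n = Σ_{k=1}^n a_k²`, the series `Σ_n ν_n^{−2} a_n⁴` converges and consequently
`ν_n^{−2} Σ_{k=1}^n a_k⁴ → 0`. -/
theorem reinforced_lindeberg_estimate
    (p : ℝ) (hp0 : 0 < p) (hp34 : p < 3 / 4) (a : ℝ) (ha : a = 2 * p - 1)
    (aseq : ℕ → ℝ) (haseq1 : aseq 1 = 1)
    (haseq : ∀ n : ℕ, 2 ≤ n →
      aseq n = Real.Gamma (a + 1) * Real.Gamma n / Real.Gamma (n + a))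
    (ν : ℕ → ℝ) (hν : ∀ n, ν n = ∑ k ∈ Finset.Icc 1 n, (aseq k) ^ 2) :
    Summable (fun n : ℕ => (ν (n + 1))⁻¹ ^ 2 * (aseq (n + 1)) ^ 4) ∧
    Tendsto (fun n : ℕ => (ν n)⁻¹ ^ 2 * ∑ k ∈ Finset.Icc 1 n, (aseq k) ^ 4)
      atTop (𝓝 0) := by
  have ha1 : (-1:ℝ) < a := by rw [ha]; linarith
  have ha2 : a < 1/2 := by rw [ha]; linarith
  have hna : ∀ n : ℕ, 1 ≤ n → (0:ℝ) < (n:ℝ) + a := by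
    intro n hn
    have : (1:ℝ) ≤ (n:ℝ) := by exact_mod_cast hn
    linarith
  -- formula holds for all n ≥ 1
  have hform : ∀ n : ℕ, 1 ≤ n →
      aseq n = Real.Gamma (a + 1) * Real.Gamma n / Real.Gamma (n + a) := by
    intro n hn
    rcases Nat.lt_or_ge n 2 with h2 | h2
    · have hn1 : n = 1 := by omega
      subst hn1
      have hΓ : Real.Gamma (a + 1) ≠ 0 := (Real.Gamma_pos_of_pos (by linarith)).ne'
      rw [haseq1]
      push_cast
      rw [Real.Gamma_one, add_comm (1:ℝ) a]
      field_simp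
    · exact haseq n h2
  -- recursion
  have hrec : ∀ n : ℕ, 1 ≤ n → aseq (n+1) = aseq n * ((n:ℝ) / ((n:ℝ) + a)) := by
    intro n hn
    have hn' : (1:ℝ) ≤ (n:ℝ) := by exact_mod_cast hn
    have hn0 : (n:ℝ) ≠ 0 := by linarith
    have hna' := hna n hn
    have hΓ : Real.Gamma ((n:ℝ) + a) ≠ 0 := (Real.Gamma_pos_of_pos hna').ne'
    have hΓn : Real.Gamma (n:ℝ) ≠ 0 := (Real.Gamma_pos_of_pos (by linarith)).ne'
    rw [hform (n+1) (by omega), hform n hn]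
    push_cast
    rw [Real.Gamma_add_one hn0,
      show ((n:ℝ) + 1 + a) = ((n:ℝ) + a) + 1 by ring,
      Real.Gamma_add_one hna'.ne']
    field_simp
  -- positivity
  have hpos : ∀ n : ℕ, 1 ≤ n → 0 < aseq n := by
    intro n hn
    induction n, hn using Nat.le_induction with
    | base => rw [haseq1]; norm_num
    | succ n hn ih =>
      rw [hrec n hn]
      have hn' : (0:ℝ) < (n:ℝ) := by exact_mod_cast hn
      exact mul_pos ih (div_pos hn' (hna n hn))
  -- squared recursion
  have he2 : ∀ n : ℕ, 1 ≤ n →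
      ((n:ℝ) + a)^2 * aseq (n+1) ^ 2 = (n:ℝ)^2 * aseq n ^ 2 := by
    intro n hn
    rw [hrec n hn]
    have := (hna n hn).ne'
    field_simp
  -- ν basic
  have hν1 : ∀ n : ℕ, 1 ≤ n → 1 ≤ ν n := by
    intro n hn
    rw [hν]
    calc (1:ℝ) = aseq 1 ^ 2 := by rw [haseq1]; norm_num
    _ ≤ _ := Finset.single_le_sum (f := fun k => aseq k ^ 2)
        (fun i _ => sq_nonneg _) (Finset.mem_Icc.mpr ⟨le_refl 1, hn⟩)
  have hνpos : ∀ n : ℕ, 1 ≤ n → 0 < ν n := fun n hn => lt_of_lt_of_le one_pos (hν1 n hn)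
  have hνsucc : ∀ n : ℕ, ν (n+1) = ν n + aseq (n+1) ^ 2 := by
    intro n
    rw [hν, hν, Finset.sum_Icc_succ_top (by omega)]
  -- key bound : n * a_n^2 ≤ 3 * ν n
  have hkey : ∀ n : ℕ, 1 ≤ n → (n:ℝ) * aseq n ^ 2 ≤ 3 * ν n := by
    intro n hn
    induction n, hn using Nat.le_induction with
    | base =>
      rw [haseq1]
      have := hν1 1 le_rfl
      push_cast
      nlinarith
    | succ n hn ih =>
      have hn' : (1:ℝ) ≤ (n:ℝ) := by exact_mod_cast hn
      have e2 := he2 n hn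
      have hA := sq_nonneg (aseq n)
      have hB := sq_nonneg (aseq (n+1))
      have hnn := hna n hn
      have h3 : (0:ℝ) ≤ 2*a*(n:ℝ) + a^2 + 2*(n:ℝ) := by
        nlinarith [mul_nonneg (by linarith : (0:ℝ) ≤ 2*a+2) (by linarith : (0:ℝ) ≤ (n:ℝ)-1), sq_nonneg a]
      have h4 : ((n:ℝ)+a)^2 * ((n:ℝ) * aseq n ^ 2 + 3 * aseq (n+1) ^ 2 - ((n:ℝ)+1) * aseq (n+1) ^ 2)
          = aseq n ^ 2 * ((n:ℝ) * (2*a*(n:ℝ) + a^2 + 2*(n:ℝ))) := by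
        linear_combination ((2:ℝ) - (n:ℝ)) * e2
      have h5 : (0:ℝ) ≤ aseq n ^ 2 * ((n:ℝ) * (2*a*(n:ℝ) + a^2 + 2*(n:ℝ))) :=
        mul_nonneg hA (mul_nonneg (by linarith) h3)
      have key2 : ((n:ℝ) + 1) * aseq (n+1) ^ 2 ≤ (n:ℝ) * aseq n ^ 2 + 3 * aseq (n+1) ^ 2 := by
        nlinarith [h4, h5, mul_pos hnn hnn]
      rw [hνsucc n]
      push_cast
      linarith
  -- consequence: a_n^2 / ν n ≤ 3 / n
  -- boundedness: for 1 ≤ k ≤ n, a_k^2 ≤ 1 + a_n^2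
  have hbdd : ∀ k n : ℕ, 1 ≤ k → k ≤ n → aseq k ^ 2 ≤ 1 + aseq n ^ 2 := by
    rcases le_or_gt 0 a with haa | haa
    · -- a ≥ 0 : sequence ≤ 1
      have hle1 : ∀ k : ℕ, 1 ≤ k → aseq k ≤ 1 := by
        intro k hk
        induction k, hk using Nat.le_induction with
        | base => rw [haseq1]
        | succ k hk ih =>
          rw [hrec k hk]
          have hk' : (0:ℝ) < (k:ℝ) := by exact_mod_cast hk
          have : (k:ℝ) / ((k:ℝ) + a) ≤ 1 := by
            rw [div_le_one (hna k hk)]; linarith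
          calc aseq k * ((k:ℝ) / ((k:ℝ) + a)) ≤ aseq k * 1 :=
            mul_le_mul_of_nonneg_left this (hpos k hk).le
          _ = aseq k := mul_one _
          _ ≤ 1 := ih
      intro k n hk hkn
      have h1 := hle1 k hk
      have h2 := (hpos k hk).le
      nlinarith [sq_nonneg (aseq n)]
    · -- a < 0 : sequence increasing
      have hmono : ∀ k n : ℕ, 1 ≤ k → k ≤ n → aseq k ≤ aseq n := by
        intro k n hk hkn
        induction n, hkn using Nat.le_induction with
        | base => exact le_refl _
        | succ m hm ih =>
          have hm1 : 1 ≤ m := le_trans hk hm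
          have h1 : (1:ℝ) ≤ (m:ℝ) / ((m:ℝ) + a) := by
            rw [le_div_iff₀ (hna m hm1)]; linarith
          calc aseq k ≤ aseq m := ih
          _ = aseq m * 1 := (mul_one _).symm
          _ ≤ aseq m * ((m:ℝ) / ((m:ℝ) + a)) :=
            mul_le_mul_of_nonneg_left h1 (hpos m hm1).le
          _ = aseq (m+1) := (hrec m hm1).symm
      intro k n hk hkn
      have h1 := hmono k n hk hkn
      have h2 := (hpos k hk).le
      nlinarith
  -- ν tends to infinity
  have hνtop : Tendsto ν atTop atTop := by
    -- get K with (K:ℝ)*(1-2a) ≥ a^2 and K ≥ 1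
    obtain ⟨K, hK⟩ := exists_nat_ge (a^2 / (1 - 2*a) + 1)
    have h12a : (0:ℝ) < 1 - 2*a := by linarith
    have hK1 : 1 ≤ K := by
      by_contra h
      have : K = 0 := by omega
      subst this
      simp at hK
      nlinarith [sq_nonneg a, div_nonneg (sq_nonneg a) h12a.le]
    have hKa : a^2 ≤ (K:ℝ) * (1 - 2*a) := by
      rw [div_add' _ _ _ h12a.ne'] at hK
      rw [div_le_iff₀ h12a] at hK
      nlinarith
    -- m * a_m^2 is monotone for m ≥ K
    have hmono2 : ∀ m : ℕ, K ≤ m → (K:ℝ) * aseq K ^ 2 ≤ (m:ℝ) * aseq m ^ 2 := by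
      intro m hm
      induction m, hm using Nat.le_induction with
      | base => exact le_refl _
      | succ m hm ih =>
        have hm1 : 1 ≤ m := le_trans hK1 hm
        have hm' : (K:ℝ) ≤ (m:ℝ) := by exact_mod_cast hm
        have e2 := he2 m hm1
        have hmm := hna m hm1
        have hm'' : (1:ℝ) ≤ (m:ℝ) := by exact_mod_cast hm1
        have h3 : (0:ℝ) ≤ (m:ℝ)*(1-2*a) - a^2 := by
          nlinarith [mul_nonneg (by linarith : (0:ℝ) ≤ (m:ℝ)-(K:ℝ)) h12a.le, hKa]
        have h4 : ((m:ℝ)+a)^2 * (((m:ℝ)+1) * aseq (m+1) ^ 2 - (m:ℝ) * aseq m ^ 2)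
            = aseq m ^ 2 * ((m:ℝ) * ((m:ℝ)*(1-2*a) - a^2)) := by
          linear_combination ((m:ℝ)+1) * e2
        have h5 : (0:ℝ) ≤ aseq m ^ 2 * ((m:ℝ) * ((m:ℝ)*(1-2*a) - a^2)) :=
          mul_nonneg (sq_nonneg _) (mul_nonneg (by linarith) h3)
        have hsq : (0:ℝ) < ((m:ℝ)+a)^2 := by positivity
        have step : (m:ℝ) * aseq m ^ 2 ≤ ((m:ℝ) + 1) * aseq (m+1) ^ 2 := by
          have h6 : (0:ℝ) ≤ ((m:ℝ)+a)^2 * (((m:ℝ)+1) * aseq (m+1) ^ 2 - (m:ℝ) * aseq m ^ 2) := by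
            rw [h4]; exact h5
          have h7 : (0:ℝ) ≤ ((m:ℝ)+1) * aseq (m+1) ^ 2 - (m:ℝ) * aseq m ^ 2 :=
            (mul_nonneg_iff_of_pos_left hsq).mp h6
          linarith
        push_cast
        linarith
    have hεpos : 0 < (K:ℝ) * aseq K ^ 2 := by
      have hK' : (0:ℝ) < (K:ℝ) := by exact_mod_cast hK1
      exact mul_pos hK' (pow_pos (hpos K hK1) 2)
    -- a_k^2 not summable
    have hns : ¬ Summable (fun k : ℕ => aseq k ^ 2) := by
      intro hs
      have hs2 : Summable (fun k : ℕ => aseq (k + K) ^ 2) := by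
        exact (summable_nat_add_iff (f := fun k : ℕ => aseq k ^ 2) K).mpr hs
      have hs3 : Summable (fun k : ℕ => (K:ℝ) * aseq K ^ 2 * (1 / ((k:ℝ) + K))) := by
        apply Summable.of_nonneg_of_le _ _ hs2
        · intro n
          positivity
        · intro n
          have hn1 : 1 ≤ n + K := by omega
          have hKn : K ≤ n + K := by omega
          have h := hmono2 (n + K) hKn
          have hp' : (0:ℝ) < ((n + K : ℕ):ℝ) := by exact_mod_cast (by omega : 0 < n + K)
          rw [mul_one_div, div_le_iff₀ (by push_cast at hp' ⊢; linarith)]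
          push_cast at h ⊢
          nlinarith [h]
      have hs4 : Summable (fun k : ℕ => 1 / ((k:ℝ) + K)) :=
        (summable_mul_left_iff hεpos.ne').mp hs3
      have hs5 : Summable (fun k : ℕ => 1 / ((((k + K):ℕ)):ℝ)) := by
        have heq : (fun k : ℕ => 1 / ((((k + K):ℕ)):ℝ)) = fun k : ℕ => 1 / ((k:ℝ) + K) := by
          funext k; push_cast; ring
        rw [heq]; exact hs4
      exact Real.not_summable_one_div_natCast ((summable_nat_add_iff (f := fun k : ℕ => 1 / ((k:ℕ):ℝ)) K).mp hs5)
    have htop : Tendsto (fun n => ∑ i ∈ Finset.range n, aseq i ^ 2) atTop atTop :=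
      (not_summable_iff_tendsto_nat_atTop_of_nonneg (fun n => sq_nonneg _)).mp hns
    have hrange : ∀ n : ℕ, ∑ i ∈ Finset.range (n+1), aseq i ^ 2 = aseq 0 ^ 2 + ν n := by
      intro n
      induction n with
      | zero => simp [hν]
      | succ n ih =>
        rw [Finset.sum_range_succ, ih, hνsucc]
        ring
    have h1 : Tendsto (fun n : ℕ => aseq 0 ^ 2 + ν n) atTop atTop := by
      rw [show (fun n : ℕ => aseq 0 ^ 2 + ν n) = fun n => ∑ i ∈ Finset.range (n+1), aseq i ^ 2 from funext fun n => (hrange n).symm]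
      exact (tendsto_add_atTop_iff_nat 1).mpr htop
    have := tendsto_atTop_add_const_left atTop (-(aseq 0 ^ 2)) h1
    convert this using 2 with n
    ring
  constructor
  · -- summability
    have hgsum : Summable (fun n : ℕ => 9 * (1 / ((n:ℝ)+1) ^ 2)) := by
      apply Summable.mul_left
      have h0 : Summable (fun n : ℕ => 1 / ((n:ℕ):ℝ) ^ 2) :=
        Real.summable_one_div_nat_pow.mpr one_lt_two
      have h2 := (summable_nat_add_iff (f := fun n : ℕ => 1 / ((n:ℕ):ℝ) ^ 2) 1).mpr h0
      have heq : (fun n : ℕ => 1 / ((n:ℝ)+1) ^ 2) = fun n : ℕ => 1 / ((((n+1):ℕ)):ℝ) ^ 2 := by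
        funext n; push_cast; ring
      rw [heq]; exact h2
    refine Summable.of_nonneg_of_le (fun n => by positivity) (fun n => ?_) hgsum
    · -- pointwise bound
      have hn1 : 1 ≤ n + 1 := by omega
      have hν' := hνpos (n+1) hn1
      have hk := hkey (n+1) hn1
      have hb : aseq (n+1) ^ 2 / ν (n+1) ≤ 3 / ((n:ℝ)+1) := by
        rw [div_le_div_iff₀ hν' (by positivity)]
        push_cast at hk ⊢
        linarith
      have hb0 : 0 ≤ aseq (n+1) ^ 2 / ν (n+1) := by positivity
      have := mul_self_le_mul_self hb0 hb
      calc (ν (n + 1))⁻¹ ^ 2 * aseq (n + 1) ^ 4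
          = (aseq (n+1) ^ 2 / ν (n+1)) * (aseq (n+1) ^ 2 / ν (n+1)) := by
            field_simp
        _ ≤ (3 / ((n:ℝ)+1)) * (3 / ((n:ℝ)+1)) := this
        _ = 9 * (1 / ((n:ℝ)+1) ^ 2) := by field_simp; ring
  · -- tendsto part
    apply squeeze_zero' (g := fun n : ℕ => (ν n)⁻¹ + 3 / (n:ℝ))
    · filter_upwards with n
      positivity
    · filter_upwards [eventually_ge_atTop 1] with n hn
      have hν' := hνpos n hn
      have hn' : (1:ℝ) ≤ (n:ℝ) := by exact_mod_cast hn
      have hsum : ∑ k ∈ Finset.Icc 1 n, aseq k ^ 4 ≤ (1 + aseq n ^ 2) * ν n := by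
        rw [hν, Finset.mul_sum]
        apply Finset.sum_le_sum
        intro k hk
        obtain ⟨hk1, hk2⟩ := Finset.mem_Icc.mp hk
        have := hbdd k n hk1 hk2
        nlinarith [sq_nonneg (aseq k)]
      have hstep : (ν n)⁻¹ ^ 2 * ∑ k ∈ Finset.Icc 1 n, aseq k ^ 4
          ≤ (1 + aseq n ^ 2) / ν n := by
        calc (ν n)⁻¹ ^ 2 * ∑ k ∈ Finset.Icc 1 n, aseq k ^ 4
            ≤ (ν n)⁻¹ ^ 2 * ((1 + aseq n ^ 2) * ν n) :=
              mul_le_mul_of_nonneg_left hsum (by positivity)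
          _ = (1 + aseq n ^ 2) / ν n := by field_simp
      have hlast : (1 + aseq n ^ 2) / ν n ≤ (ν n)⁻¹ + 3 / (n:ℝ) := by
        have h5 : aseq n ^ 2 / ν n ≤ 3 / (n:ℝ) := by
          rw [div_le_div_iff₀ hν' (by linarith : (0:ℝ) < (n:ℝ))]
          nlinarith [hkey n hn]
        have h6 : (1 + aseq n ^ 2) / ν n = (ν n)⁻¹ + aseq n ^ 2 / ν n := by
          rw [add_div, one_div]
        rw [h6]
        linarith
      linarith
    · have h1 : Tendsto (fun n : ℕ => (ν n)⁻¹) atTop (𝓝 0) := hνtop.inv_tendsto_atTop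
      have h2 := tendsto_const_div_atTop_nhds_zero_nat (3:ℝ)
      simpa using h1.add h2
end
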